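/- Let A and ΔA be real m×n matrices with rank(A) = n and ‖ΔA‖₂‖A†‖₂ ≤ 1/2, and set ε = ‖ΔA‖₂/‖A‖₂ and κ = κ₂(A). Then for each j with ℓ_j > 0, |ℓ̃_j − ℓ_j|/ℓ_j ≤ (2√((1−ℓ_j)/ℓ_j) + κ ε/ℓ_j) κ ε. -/

import Mathlib

set_option maxHeartbeats 1000000

open Matrix

/-- Spectral (two-)norm of a real rectangular matrix. -/
noncomputable def spec {m n : ℕ} (A : Matrix (Fin m) (Fin n) ℝ) : ℝ :=
  ‖LinearMap.toContinuousLinearMap (Matrix.toEuclideanLin A)‖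

/-- Frobenius norm. -/
noncomputable def frob {m n : ℕ} (A : Matrix (Fin m) (Fin n) ℝ) : ℝ :=
  Real.sqrt (∑ i, ∑ j, (A i j) ^ 2)

/-- Leverage score: squared Euclidean norm of the j-th row. -/
noncomputable def lev {m n : ℕ} (Q : Matrix (Fin m) (Fin n) ℝ) (j : Fin m) : ℝ :=
  ∑ k, (Q j k) ^ 2

/-- Euclidean norm of the j-th row. -/
noncomputable def rnorm {m n : ℕ} (A : Matrix (Fin m) (Fin n) ℝ) (j : Fin m) : ℝ :=
  Real.sqrt (∑ k, (A j k) ^ 2)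

/-- Moore–Penrose inverse of a full column rank matrix. -/
noncomputable def pinv {m n : ℕ} (A : Matrix (Fin m) (Fin n) ℝ) : Matrix (Fin n) (Fin m) ℝ :=
  (Aᵀ * A)⁻¹ * Aᵀ

namespace LevAux

lemma toE_apply {m n : ℕ} (M : Matrix (Fin m) (Fin n) ℝ) (x : EuclideanSpace ℝ (Fin n)) :
    Matrix.toEuclideanLin M x = M.mulVec x := rfl

lemma toE_mul {m k n : ℕ} (M : Matrix (Fin m) (Fin k) ℝ) (N : Matrix (Fin k) (Fin n) ℝ)
    (x : EuclideanSpace ℝ (Fin n)) :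
    Matrix.toEuclideanLin (M * N) x = Matrix.toEuclideanLin M (Matrix.toEuclideanLin N x) := by
  show WithLp.toLp 2 ((M * N) *ᵥ x.ofLp) = WithLp.toLp 2 (M *ᵥ (N *ᵥ x.ofLp))
  rw [Matrix.mulVec_mulVec]

lemma toE_one {n : ℕ} (x : EuclideanSpace ℝ (Fin n)) :
    Matrix.toEuclideanLin (1 : Matrix (Fin n) (Fin n) ℝ) x = x := by
  show WithLp.toLp 2 ((1 : Matrix (Fin n) (Fin n) ℝ) *ᵥ x.ofLp) = x
  rw [Matrix.one_mulVec]

lemma toE_norm_le {m n : ℕ} (M : Matrix (Fin m) (Fin n) ℝ) (x : EuclideanSpace ℝ (Fin n)) :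
    ‖Matrix.toEuclideanLin M x‖ ≤ spec M * ‖x‖ :=
  (LinearMap.toContinuousLinearMap (Matrix.toEuclideanLin M)).le_opNorm x

lemma inner_toE {m n : ℕ} (M : Matrix (Fin m) (Fin n) ℝ) (x : EuclideanSpace ℝ (Fin n))
    (y : EuclideanSpace ℝ (Fin m)) :
    (inner ℝ (Matrix.toEuclideanLin M x) y : ℝ) = inner ℝ x (Matrix.toEuclideanLin Mᵀ y) := by
  show y.ofLp ⬝ᵥ (M *ᵥ x.ofLp) = (Mᵀ *ᵥ y.ofLp) ⬝ᵥ x.ofLp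
  rw [Matrix.dotProduct_mulVec, Matrix.mulVec_transpose]

lemma sq_le_of_le {a b : ℝ} (ha : 0 ≤ a) (h : a ≤ b) : a ^ 2 ≤ b ^ 2 := by nlinarith

lemma le_of_sq_le_sq {a b : ℝ} (ha : 0 ≤ a) (hb : 0 ≤ b) (h : a ^ 2 ≤ b ^ 2) : a ≤ b := by
  nlinarith

section proj

variable {m : ℕ} {P : Matrix (Fin m) (Fin m) ℝ}

lemma proj_inner_comm (hPs : Pᵀ = P) (x y : EuclideanSpace ℝ (Fin m)) :
    (inner ℝ (Matrix.toEuclideanLin P x) y : ℝ) = inner ℝ x (Matrix.toEuclideanLin P y) := by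
  rw [inner_toE, hPs]

lemma proj_self_inner (hP2 : P * P = P) (hPs : Pᵀ = P) (x : EuclideanSpace ℝ (Fin m)) :
    (inner ℝ (Matrix.toEuclideanLin P x) (Matrix.toEuclideanLin P x) : ℝ)
      = inner ℝ x (Matrix.toEuclideanLin P x) := by
  rw [proj_inner_comm hPs, ← toE_mul, hP2]

lemma proj_orth (hP2 : P * P = P) (hPs : Pᵀ = P) (x : EuclideanSpace ℝ (Fin m)) :
    (inner ℝ (Matrix.toEuclideanLin P x) (x - Matrix.toEuclideanLin P x) : ℝ) = 0 := by
  rw [inner_sub_right, proj_self_inner hP2 hPs, real_inner_comm]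
  ring

lemma proj_pyth (hP2 : P * P = P) (hPs : Pᵀ = P) (x : EuclideanSpace ℝ (Fin m)) :
    ‖x‖ ^ 2 = ‖Matrix.toEuclideanLin P x‖ ^ 2 + ‖x - Matrix.toEuclideanLin P x‖ ^ 2 := by
  have h0 := proj_orth hP2 hPs x
  have hx : Matrix.toEuclideanLin P x + (x - Matrix.toEuclideanLin P x) = x := by abel
  calc ‖x‖ ^ 2 = ‖Matrix.toEuclideanLin P x + (x - Matrix.toEuclideanLin P x)‖ ^ 2 := by
        rw [hx]
    _ = _ := by rw [norm_add_sq_real, h0]; ring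

lemma proj_norm_le (hP2 : P * P = P) (hPs : Pᵀ = P) (x : EuclideanSpace ℝ (Fin m)) :
    ‖Matrix.toEuclideanLin P x‖ ≤ ‖x‖ := by
  have h := proj_pyth hP2 hPs x
  exact le_of_sq_le_sq (norm_nonneg _) (norm_nonneg _) (by nlinarith [sq_nonneg ‖x - Matrix.toEuclideanLin P x‖])

lemma proj_sub_norm_le (hP2 : P * P = P) (hPs : Pᵀ = P) (x : EuclideanSpace ℝ (Fin m)) :
    ‖x - Matrix.toEuclideanLin P x‖ ≤ ‖x‖ := by
  have h := proj_pyth hP2 hPs x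
  exact le_of_sq_le_sq (norm_nonneg _) (norm_nonneg _) (by nlinarith [sq_nonneg ‖Matrix.toEuclideanLin P x‖])

end proj

/-- Duality of the sine bound for equidimensional subspaces. -/
lemma dual_bound {m : ℕ} {P P' : Matrix (Fin m) (Fin m) ℝ}
    (hP2 : P * P = P) (hPs : Pᵀ = P) (hP'2 : P' * P' = P') (hP's : P'ᵀ = P')
    {U V : Submodule ℝ (EuclideanSpace ℝ (Fin m))}
    (hUfix : ∀ u ∈ U, Matrix.toEuclideanLin P u = u)
    (hP'V : ∀ x, Matrix.toEuclideanLin P' x ∈ V)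
    (hfin : Module.finrank ℝ U = Module.finrank ℝ V)
    {t : ℝ} (ht0 : 0 ≤ t) (ht1 : t < 1)
    (hsin : ∀ u ∈ U, ‖u - Matrix.toEuclideanLin P' u‖ ≤ t * ‖u‖) :
    ∀ v ∈ V, ‖v - Matrix.toEuclideanLin P v‖ ≤ t * ‖v‖ := by
  set s : ℝ := Real.sqrt (1 - t ^ 2) with hs_def
  have hc2 : (0 : ℝ) < 1 - t ^ 2 := by nlinarith
  have hs0 : 0 < s := Real.sqrt_pos.mpr hc2
  have hs2 : s ^ 2 = 1 - t ^ 2 := Real.sq_sqrt hc2.le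
  set L : U →ₗ[ℝ] V :=
    LinearMap.codRestrict V ((Matrix.toEuclideanLin P').comp U.subtype)
      (fun u => hP'V _) with hL_def
  have hLapp : ∀ u : U, (L u : EuclideanSpace ℝ (Fin m))
      = Matrix.toEuclideanLin P' (u : EuclideanSpace ℝ (Fin m)) := fun u => rfl
  have hLlow : ∀ u : U, s * ‖(u : EuclideanSpace ℝ (Fin m))‖ ≤ ‖(L u : EuclideanSpace ℝ (Fin m))‖ := by
    intro u
    have hp := proj_pyth hP'2 hP's (u : EuclideanSpace ℝ (Fin m))
    have hs1 := hsin u u.2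
    have hs1' : ‖(u : EuclideanSpace ℝ (Fin m)) - Matrix.toEuclideanLin P' u‖ ^ 2
        ≤ t ^ 2 * ‖(u : EuclideanSpace ℝ (Fin m))‖ ^ 2 := by
      have := sq_le_of_le (norm_nonneg _) hs1
      calc ‖(u : EuclideanSpace ℝ (Fin m)) - Matrix.toEuclideanLin P' u‖ ^ 2
          ≤ (t * ‖(u : EuclideanSpace ℝ (Fin m))‖) ^ 2 := this
        _ = t ^ 2 * ‖(u : EuclideanSpace ℝ (Fin m))‖ ^ 2 := by ring
    rw [hLapp]
    apply le_of_sq_le_sq (by positivity) (norm_nonneg _)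
    calc (s * ‖(u : EuclideanSpace ℝ (Fin m))‖) ^ 2
        = (1 - t ^ 2) * ‖(u : EuclideanSpace ℝ (Fin m))‖ ^ 2 := by rw [mul_pow, hs2]
      _ ≤ ‖Matrix.toEuclideanLin P' (u : EuclideanSpace ℝ (Fin m))‖ ^ 2 := by nlinarith
  have hLinj : Function.Injective L := by
    rw [← LinearMap.ker_eq_bot, LinearMap.ker_eq_bot']
    intro u hu
    have h1 := hLlow u
    rw [hu] at h1
    simp only [ZeroMemClass.coe_zero, norm_zero] at h1
    have h2 : ‖(u : EuclideanSpace ℝ (Fin m))‖ = 0 := by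
      by_contra hne
      have : 0 < ‖(u : EuclideanSpace ℝ (Fin m))‖ :=
        lt_of_le_of_ne (norm_nonneg _) (Ne.symm hne)
      nlinarith
    exact Subtype.ext (norm_eq_zero.mp h2)
  have hLsurj : Function.Surjective L :=
    (LinearMap.injective_iff_surjective_of_finrank_eq_finrank hfin).mp hLinj
  intro v hv
  by_cases hv0 : v = 0
  · simp [hv0]
  have hvn : 0 < ‖v‖ := norm_pos_iff.mpr hv0
  obtain ⟨u, hu⟩ := hLsurj ⟨v, hv⟩
  have huv : Matrix.toEuclideanLin P' (u : EuclideanSpace ℝ (Fin m)) = v := by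
    have := congrArg (Subtype.val) hu
    rw [← hLapp u]
    exact this
  have hinner : (inner ℝ (u : EuclideanSpace ℝ (Fin m)) v : ℝ) = ‖v‖ ^ 2 := by
    rw [← huv, ← real_inner_self_eq_norm_sq]
    exact (proj_self_inner hP'2 hP's _).symm
  have hPu : Matrix.toEuclideanLin P (u : EuclideanSpace ℝ (Fin m)) = u := hUfix _ u.2
  have hPvlow : ‖v‖ ^ 2 ≤ ‖Matrix.toEuclideanLin P v‖ * ‖(u : EuclideanSpace ℝ (Fin m))‖ := by
    calc ‖v‖ ^ 2 = (inner ℝ (u : EuclideanSpace ℝ (Fin m)) v : ℝ) := hinner.symm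
      _ = (inner ℝ (Matrix.toEuclideanLin P (u : EuclideanSpace ℝ (Fin m))) v : ℝ) := by rw [hPu]
      _ = (inner ℝ (u : EuclideanSpace ℝ (Fin m)) (Matrix.toEuclideanLin P v) : ℝ) :=
          proj_inner_comm hPs _ _
      _ ≤ ‖(u : EuclideanSpace ℝ (Fin m))‖ * ‖Matrix.toEuclideanLin P v‖ :=
          real_inner_le_norm _ _
      _ = ‖Matrix.toEuclideanLin P v‖ * ‖(u : EuclideanSpace ℝ (Fin m))‖ := mul_comm _ _
  have hus : s * ‖(u : EuclideanSpace ℝ (Fin m))‖ ≤ ‖v‖ := by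
    have := hLlow u
    rw [hu] at this
    exact this
  have hPvge : s * ‖v‖ ≤ ‖Matrix.toEuclideanLin P v‖ := by
    have step : s * ‖v‖ ^ 2 ≤ ‖Matrix.toEuclideanLin P v‖ * ‖v‖ := by
      calc s * ‖v‖ ^ 2
          ≤ s * (‖Matrix.toEuclideanLin P v‖ * ‖(u : EuclideanSpace ℝ (Fin m))‖) := by
            exact mul_le_mul_of_nonneg_left hPvlow hs0.le
        _ = ‖Matrix.toEuclideanLin P v‖ * (s * ‖(u : EuclideanSpace ℝ (Fin m))‖) := by ring
        _ ≤ ‖Matrix.toEuclideanLin P v‖ * ‖v‖ :=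
            mul_le_mul_of_nonneg_left hus (norm_nonneg _)
    nlinarith
  have hpy := proj_pyth hP2 hPs v
  have hsq : ‖v - Matrix.toEuclideanLin P v‖ ^ 2 ≤ (t * ‖v‖) ^ 2 := by
    have h3 : (s * ‖v‖) ^ 2 ≤ ‖Matrix.toEuclideanLin P v‖ ^ 2 :=
      sq_le_of_le (by positivity) hPvge
    have h4 : (s * ‖v‖) ^ 2 = (1 - t ^ 2) * ‖v‖ ^ 2 := by rw [mul_pow, hs2]
    nlinarith
  exact le_of_sq_le_sq (norm_nonneg _) (by positivity) hsq

/-- Leverage score as an inner ℝ product with the projection matrix. -/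
lemma lev_eq_inner {m n : ℕ} (R : Matrix (Fin m) (Fin n) ℝ) (j : Fin m) :
    lev R j = (inner ℝ (EuclideanSpace.single j (1:ℝ))
      (Matrix.toEuclideanLin (R * Rᵀ) (EuclideanSpace.single j (1:ℝ))) : ℝ) := by
  rw [EuclideanSpace.inner_single_left]
  have : (Matrix.toEuclideanLin (R * Rᵀ) (EuclideanSpace.single j (1:ℝ))) j
      = (R * Rᵀ) j j := by
    show ((R * Rᵀ) *ᵥ (EuclideanSpace.single j (1:ℝ))) j = _
    simp [Matrix.mulVec, dotProduct, EuclideanSpace.single_apply]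
  rw [this]
  simp [lev, Matrix.mul_apply, pow_two]

/-- The central perturbation estimate for diagonal entries of the two projections. -/
lemma key_bound {m : ℕ} {P P' : Matrix (Fin m) (Fin m) ℝ}
    (hP2 : P * P = P) (hPs : Pᵀ = P) (hP'2 : P' * P' = P') (hP's : P'ᵀ = P')
    {U V : Submodule ℝ (EuclideanSpace ℝ (Fin m))}
    (hPU : ∀ x, Matrix.toEuclideanLin P x ∈ U)
    (hP'V : ∀ x, Matrix.toEuclideanLin P' x ∈ V)
    {t : ℝ} (ht0 : 0 ≤ t)
    (hsin1 : ∀ u ∈ U, ‖u - Matrix.toEuclideanLin P' u‖ ≤ t * ‖u‖)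
    (hsin2 : ∀ v ∈ V, ‖v - Matrix.toEuclideanLin P v‖ ≤ t * ‖v‖)
    (e : EuclideanSpace ℝ (Fin m)) (he : ‖e‖ = 1) :
    |(inner ℝ e (Matrix.toEuclideanLin P' e) : ℝ) - (inner ℝ e (Matrix.toEuclideanLin P e) : ℝ)|
      ≤ t ^ 2 + 2 * t * (‖Matrix.toEuclideanLin P e‖ * ‖e - Matrix.toEuclideanLin P e‖) := by
  set p : EuclideanSpace ℝ (Fin m) := Matrix.toEuclideanLin P e with hp_def
  set q : EuclideanSpace ℝ (Fin m) := e - p with hq_def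
  have hepq : e = p + q := by rw [hq_def]; abel
  have hPp : Matrix.toEuclideanLin P p = p := by
    rw [hp_def, ← toE_mul, hP2]
  have hPq : Matrix.toEuclideanLin P q = 0 := by
    rw [hq_def, map_sub, hPp, sub_self]
  -- decomposition of ⟪e, P'e⟫
  have hcross : (inner ℝ q (Matrix.toEuclideanLin P' p) : ℝ)
      = inner ℝ p (Matrix.toEuclideanLin P' q) := by
    rw [← proj_inner_comm hP's q p, real_inner_comm, ← proj_inner_comm hP's]
  have hpq0 : (inner ℝ p q : ℝ) = 0 := proj_orth hP2 hPs e
  have hdec : (inner ℝ e (Matrix.toEuclideanLin P' e) : ℝ)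
      = (inner ℝ p (Matrix.toEuclideanLin P' p) : ℝ)
        + 2 * (inner ℝ p (Matrix.toEuclideanLin P' q) : ℝ)
        + (inner ℝ q (Matrix.toEuclideanLin P' q) : ℝ) := by
    nth_rewrite 1 [hepq]
    nth_rewrite 1 [hepq]
    rw [map_add, inner_add_left, inner_add_right, inner_add_right, hcross]
    ring
  -- terms
  have hterm1 : (inner ℝ p (Matrix.toEuclideanLin P' p) : ℝ)
      = ‖p‖ ^ 2 - ‖p - Matrix.toEuclideanLin P' p‖ ^ 2 := by
    have h1 : (inner ℝ p (Matrix.toEuclideanLin P' p) : ℝ)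
        = ‖Matrix.toEuclideanLin P' p‖ ^ 2 := by
      rw [← real_inner_self_eq_norm_sq]
      exact (proj_self_inner hP'2 hP's p).symm
    have h2 := proj_pyth hP'2 hP's p
    rw [h1]; linarith
  have hterm3 : (inner ℝ q (Matrix.toEuclideanLin P' q) : ℝ)
      = ‖Matrix.toEuclideanLin P' q‖ ^ 2 := by
    rw [← real_inner_self_eq_norm_sq]
    exact (proj_self_inner hP'2 hP's q).symm
  have hterm2 : (inner ℝ p (Matrix.toEuclideanLin P' q) : ℝ)
      = inner ℝ (Matrix.toEuclideanLin P' p - p) q := by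
    rw [inner_sub_left, hpq0, sub_zero]
    exact (proj_inner_comm hP's p q).symm
  -- bounds
  have hpU : p ∈ U := hPU e
  have hpnorm : ‖p‖ ≤ 1 := by
    have := proj_norm_le hP2 hPs e
    rw [he] at this; exact this
  have hqnorm : ‖q‖ ≤ 1 := by
    have := proj_sub_norm_le hP2 hPs e
    rw [he] at this; exact this
  have ha : ‖p - Matrix.toEuclideanLin P' p‖ ≤ t * ‖p‖ := hsin1 p hpU
  -- bound on b = ‖P' q‖
  have hb : ‖Matrix.toEuclideanLin P' q‖ ≤ t * ‖q‖ := by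
    set v : EuclideanSpace ℝ (Fin m) := Matrix.toEuclideanLin P' q with hv_def
    have hvV : v ∈ V := hP'V q
    have hb2 : ‖v‖ ^ 2 ≤ t * ‖v‖ * ‖q‖ := by
      have h1 : ‖v‖ ^ 2 = (inner ℝ q v : ℝ) := by
        rw [← real_inner_self_eq_norm_sq]
        rw [hv_def]
        exact proj_self_inner hP'2 hP's q
      have h2 : (inner ℝ q v : ℝ) = inner ℝ q (v - Matrix.toEuclideanLin P v) := by
        have hq0 : (inner ℝ q (Matrix.toEuclideanLin P v) : ℝ) = 0 := by
          rw [← proj_inner_comm hPs q v, hPq, inner_zero_left]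
        rw [inner_sub_right, hq0, sub_zero]
      have h3 : (inner ℝ q (v - Matrix.toEuclideanLin P v) : ℝ)
          ≤ ‖q‖ * ‖v - Matrix.toEuclideanLin P v‖ := real_inner_le_norm _ _
      have h4 : ‖v - Matrix.toEuclideanLin P v‖ ≤ t * ‖v‖ := hsin2 v hvV
      calc ‖v‖ ^ 2 = (inner ℝ q (v - Matrix.toEuclideanLin P v) : ℝ) := by rw [h1, h2]
        _ ≤ ‖q‖ * ‖v - Matrix.toEuclideanLin P v‖ := h3
        _ ≤ ‖q‖ * (t * ‖v‖) := mul_le_mul_of_nonneg_left h4 (norm_nonneg _)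
        _ = t * ‖v‖ * ‖q‖ := by ring
    by_cases hv0 : ‖v‖ = 0
    · rw [hv0]; positivity
    · have hvpos : 0 < ‖v‖ := lt_of_le_of_ne (norm_nonneg _) (Ne.symm hv0)
      nlinarith
  have hc : |(inner ℝ (Matrix.toEuclideanLin P' p - p) q : ℝ)|
      ≤ t * (‖p‖ * ‖q‖) := by
    calc |(inner ℝ (Matrix.toEuclideanLin P' p - p) q : ℝ)|
        ≤ ‖Matrix.toEuclideanLin P' p - p‖ * ‖q‖ := abs_real_inner_le_norm _ _
      _ = ‖p - Matrix.toEuclideanLin P' p‖ * ‖q‖ := by rw [norm_sub_rev]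
      _ ≤ (t * ‖p‖) * ‖q‖ := mul_le_mul_of_nonneg_right ha (norm_nonneg _)
      _ = t * (‖p‖ * ‖q‖) := by ring
  -- combine
  have ha2 : ‖p - Matrix.toEuclideanLin P' p‖ ^ 2 ≤ t ^ 2 := by
    have h1 : ‖p - Matrix.toEuclideanLin P' p‖ ≤ t := by
      calc ‖p - Matrix.toEuclideanLin P' p‖ ≤ t * ‖p‖ := ha
        _ ≤ t * 1 := mul_le_mul_of_nonneg_left hpnorm ht0
        _ = t := mul_one t
    exact sq_le_of_le (norm_nonneg _) h1
  have hb2' : ‖Matrix.toEuclideanLin P' q‖ ^ 2 ≤ t ^ 2 := by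
    have h1 : ‖Matrix.toEuclideanLin P' q‖ ≤ t := by
      calc ‖Matrix.toEuclideanLin P' q‖ ≤ t * ‖q‖ := hb
        _ ≤ t * 1 := mul_le_mul_of_nonneg_left hqnorm ht0
        _ = t := mul_one t
    exact sq_le_of_le (norm_nonneg _) h1
  have hinePe : (inner ℝ e p : ℝ) = ‖p‖ ^ 2 := by
    rw [← real_inner_self_eq_norm_sq]
    exact (proj_self_inner hP2 hPs e).symm
  rw [hdec, hterm1, hterm3, hterm2, hinePe]
  have hcl := neg_abs_le (inner ℝ (Matrix.toEuclideanLin P' p - p) q : ℝ)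
  have hcu := le_abs_self (inner ℝ (Matrix.toEuclideanLin P' p - p) q : ℝ)
  rw [abs_le]
  constructor
  · linarith [sq_nonneg ‖Matrix.toEuclideanLin P' q‖,
      sq_nonneg ‖p - Matrix.toEuclideanLin P' p‖]
  · linarith [sq_nonneg ‖Matrix.toEuclideanLin P' q‖,
      sq_nonneg ‖p - Matrix.toEuclideanLin P' p‖]

end LevAux

open LevAux in
theorem stmt9 {m n : ℕ} (A ΔA : Matrix (Fin m) (Fin n) ℝ)
    (hA : A.rank = n) (hpert : spec ΔA * spec (pinv A) ≤ 1 / 2)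
    (Q Qt : Matrix (Fin m) (Fin n) ℝ)
    (hQ : Qᵀ * Q = 1) (hQt : Qtᵀ * Qt = 1)
    (hrQ : LinearMap.range Q.mulVecLin = LinearMap.range A.mulVecLin)
    (hrQt : LinearMap.range Qt.mulVecLin = LinearMap.range (A + ΔA).mulVecLin) :
    ∀ j, 0 < lev Q j →
      |lev Qt j - lev Q j| / lev Q j ≤
        (2 * Real.sqrt ((1 - lev Q j) / lev Q j)
          + spec A * spec (pinv A) * (spec ΔA / spec A) / lev Q j)
        * (spec A * spec (pinv A) * (spec ΔA / spec A)) := by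
  intro j hl
  have hn : n ≠ 0 := by
    rintro rfl
    simp [lev] at hl
  have hAne : A ≠ 0 := by
    rintro rfl
    rw [Matrix.rank_zero] at hA
    exact hn hA.symm
  have hspecA : spec A ≠ 0 := by
    intro h
    apply hAne
    have h2 : Matrix.toEuclideanLin A = 0 := by
      apply LinearMap.ext
      intro x
      have hb := LevAux.toE_norm_le A x
      rw [h, zero_mul] at hb
      have hz : ‖Matrix.toEuclideanLin A x‖ = 0 := le_antisymm hb (norm_nonneg _)
      simpa using hz
    have hinj := LinearEquiv.injective
      (Matrix.toEuclideanLin : Matrix (Fin m) (Fin n) ℝ ≃ₗ[ℝ] _)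
    exact hinj (by rw [h2, map_zero])
  have hkt : spec A * spec (pinv A) * (spec ΔA / spec A) = spec ΔA * spec (pinv A) := by
    field_simp
  rw [hkt]
  set t : ℝ := spec ΔA * spec (pinv A) with ht_def
  have ht0 : (0:ℝ) ≤ t := mul_nonneg (norm_nonneg _) (norm_nonneg _)
  have ht : t ≤ 1/2 := hpert
  have ht1 : t < 1 := lt_of_le_of_lt ht (by norm_num)
  -- projections
  have hP2 : (Q * Qᵀ) * (Q * Qᵀ) = Q * Qᵀ := by
    rw [Matrix.mul_assoc, ← Matrix.mul_assoc Qᵀ Q Qᵀ, hQ, Matrix.one_mul]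
  have hPs : (Q * Qᵀ)ᵀ = Q * Qᵀ := by
    rw [Matrix.transpose_mul, Matrix.transpose_transpose]
  have hP'2 : (Qt * Qtᵀ) * (Qt * Qtᵀ) = Qt * Qtᵀ := by
    rw [Matrix.mul_assoc, ← Matrix.mul_assoc Qtᵀ Qt Qtᵀ, hQt, Matrix.one_mul]
  have hP's : (Qt * Qtᵀ)ᵀ = Qt * Qtᵀ := by
    rw [Matrix.transpose_mul, Matrix.transpose_transpose]
  -- subspaces
  set U : Submodule ℝ (EuclideanSpace ℝ (Fin m)) :=
    LinearMap.range (Matrix.toEuclideanLin Q) with hU_def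
  set V : Submodule ℝ (EuclideanSpace ℝ (Fin m)) :=
    LinearMap.range (Matrix.toEuclideanLin Qt) with hV_def
  have hPU : ∀ x, Matrix.toEuclideanLin (Q * Qᵀ) x ∈ U := fun x =>
    ⟨Matrix.toEuclideanLin Qᵀ x, (toE_mul Q Qᵀ x).symm⟩
  have hP'V : ∀ x, Matrix.toEuclideanLin (Qt * Qtᵀ) x ∈ V := fun x =>
    ⟨Matrix.toEuclideanLin Qtᵀ x, (toE_mul Qt Qtᵀ x).symm⟩
  have hPQ : (Q * Qᵀ) * Q = Q := by rw [Matrix.mul_assoc, hQ, Matrix.mul_one]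
  have hP'Qt : (Qt * Qtᵀ) * Qt = Qt := by rw [Matrix.mul_assoc, hQt, Matrix.mul_one]
  have hUfix : ∀ u ∈ U, Matrix.toEuclideanLin (Q * Qᵀ) u = u := by
    rintro u ⟨z, rfl⟩
    rw [← toE_mul, hPQ]
  have hVfix : ∀ v ∈ V, Matrix.toEuclideanLin (Qt * Qtᵀ) v = v := by
    rintro v ⟨z, rfl⟩
    rw [← toE_mul, hP'Qt]
  -- range transfers
  have hUA : ∀ u ∈ U, ∃ z : EuclideanSpace ℝ (Fin n), Matrix.toEuclideanLin A z = u := by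
    rintro u ⟨z, rfl⟩
    have h1 : Q.mulVec z ∈ LinearMap.range A.mulVecLin := by
      rw [← hrQ]; exact ⟨z, rfl⟩
    obtain ⟨w, hw⟩ := h1
    exact ⟨WithLp.toLp 2 w, congrArg (WithLp.toLp 2) hw⟩
  have hDV : ∀ y : EuclideanSpace ℝ (Fin n), Matrix.toEuclideanLin (A + ΔA) y ∈ V := by
    intro y
    have h1 : (A + ΔA).mulVec y ∈ LinearMap.range Qt.mulVecLin := by
      rw [hrQt]; exact ⟨y, rfl⟩
    obtain ⟨z, hz⟩ := h1
    exact ⟨WithLp.toLp 2 z, congrArg (WithLp.toLp 2) hz⟩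
  -- finranks
  have hQinj : Function.Injective (Matrix.toEuclideanLin Q) := by
    rw [← LinearMap.ker_eq_bot, LinearMap.ker_eq_bot']
    intro x hx
    have h1 := toE_mul Qᵀ Q x
    rw [hx, map_zero, hQ, toE_one] at h1
    exact h1
  have hQtinj : Function.Injective (Matrix.toEuclideanLin Qt) := by
    rw [← LinearMap.ker_eq_bot, LinearMap.ker_eq_bot']
    intro x hx
    have h1 := toE_mul Qtᵀ Qt x
    rw [hx, map_zero, hQt, toE_one] at h1
    exact h1
  have hfinU : Module.finrank ℝ U = n := by
    rw [hU_def, LinearMap.finrank_range_of_inj hQinj, finrank_euclideanSpace_fin]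
  have hfinV : Module.finrank ℝ V = n := by
    rw [hV_def, LinearMap.finrank_range_of_inj hQtinj, finrank_euclideanSpace_fin]
  -- pinv A is a left inverse
  have hAinj : Function.Injective A.mulVecLin := by
    rw [← LinearMap.ker_eq_bot]
    have h := LinearMap.finrank_range_add_finrank_ker A.mulVecLin
    rw [show Module.finrank ℝ (LinearMap.range A.mulVecLin) = n from hA,
      Module.finrank_fin_fun ℝ] at h
    have h3 : Module.finrank ℝ (LinearMap.ker A.mulVecLin) = 0 := by omega
    exact Submodule.finrank_eq_zero.mp h3
  have hATAinj : Function.Injective (Aᵀ * A).mulVecLin := by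
    rw [← LinearMap.ker_eq_bot, LinearMap.ker_eq_bot']
    intro x hx
    have hx' : (Aᵀ * A) *ᵥ x = 0 := hx
    have h1 : (A *ᵥ x) ⬝ᵥ (A *ᵥ x) = 0 := by
      have h0 : x ⬝ᵥ ((Aᵀ * A) *ᵥ x) = 0 := by rw [hx']; simp
      rw [← Matrix.mulVec_mulVec, Matrix.dotProduct_mulVec, Matrix.vecMul_transpose] at h0
      exact h0
    have h2 : A *ᵥ x = 0 := dotProduct_self_eq_zero.mp h1
    apply hAinj
    show A.mulVecLin x = A.mulVecLin 0
    rw [map_zero]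
    exact h2
  have hATAunit : IsUnit (Aᵀ * A) :=
    Matrix.mulVec_injective_iff_isUnit.mp hATAinj
  have hpinvA : pinv A * A = 1 := by
    show ((Aᵀ * A)⁻¹ * Aᵀ) * A = 1
    rw [Matrix.mul_assoc,
      Matrix.nonsing_inv_mul _ ((Matrix.isUnit_iff_isUnit_det _).mp hATAunit)]
  -- sine bound, direction 1
  have hsin1 : ∀ u ∈ U, ‖u - Matrix.toEuclideanLin (Qt * Qtᵀ) u‖ ≤ t * ‖u‖ := by
    intro u hu
    obtain ⟨z, hz⟩ := hUA u hu
    have hyz : Matrix.toEuclideanLin (pinv A) u = z := by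
      rw [← hz, ← toE_mul, hpinvA, toE_one]
    have hAy : Matrix.toEuclideanLin A (Matrix.toEuclideanLin (pinv A) u) = u := by
      rw [hyz, hz]
    have hynorm : ‖Matrix.toEuclideanLin (pinv A) u‖ ≤ spec (pinv A) * ‖u‖ :=
      toE_norm_le _ _
    set y := Matrix.toEuclideanLin (pinv A) u with hy_def
    set w := Matrix.toEuclideanLin ΔA y with hw_def
    have hsum : Matrix.toEuclideanLin (A + ΔA) y = u + w := by
      have hadd : Matrix.toEuclideanLin (A + ΔA) y
          = Matrix.toEuclideanLin A y + Matrix.toEuclideanLin ΔA y := by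
        rw [map_add, LinearMap.add_apply]
      rw [hadd, hAy, ← hw_def]
    have hfixD : Matrix.toEuclideanLin (Qt * Qtᵀ) (Matrix.toEuclideanLin (A + ΔA) y)
        = Matrix.toEuclideanLin (A + ΔA) y := hVfix _ (hDV y)
    have key : u - Matrix.toEuclideanLin (Qt * Qtᵀ) u
        = -(w - Matrix.toEuclideanLin (Qt * Qtᵀ) w) := by
      have h1 : u = Matrix.toEuclideanLin (A + ΔA) y - w := by rw [hsum]; abel
      rw [h1, map_sub, hfixD]
      abel
    rw [key, norm_neg]
    calc ‖w - Matrix.toEuclideanLin (Qt * Qtᵀ) w‖ ≤ ‖w‖ :=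
        proj_sub_norm_le hP'2 hP's w
      _ ≤ spec ΔA * ‖y‖ := toE_norm_le _ _
      _ ≤ spec ΔA * (spec (pinv A) * ‖u‖) :=
          mul_le_mul_of_nonneg_left hynorm (norm_nonneg _)
      _ = t * ‖u‖ := by rw [ht_def]; ring
  -- sine bound, direction 2 (duality)
  have hsin2 : ∀ v ∈ V, ‖v - Matrix.toEuclideanLin (Q * Qᵀ) v‖ ≤ t * ‖v‖ :=
    dual_bound hP2 hPs hP'2 hP's hUfix hP'V (by rw [hfinU, hfinV]) ht0 ht1 hsin1
  -- the key estimate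
  have he1 : ‖(EuclideanSpace.single j (1:ℝ) : EuclideanSpace ℝ (Fin m))‖ = 1 := by
    rw [EuclideanSpace.norm_single, norm_one]
  have key := key_bound hP2 hPs hP'2 hP's hPU hP'V ht0 hsin1 hsin2
    (EuclideanSpace.single j (1:ℝ)) he1
  rw [← lev_eq_inner Qt j, ← lev_eq_inner Q j] at key
  -- norm identifications
  have hlp : lev Q j
      = ‖Matrix.toEuclideanLin (Q * Qᵀ) (EuclideanSpace.single j (1:ℝ))‖ ^ 2 := by
    rw [lev_eq_inner Q j, ← real_inner_self_eq_norm_sq]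
    exact (proj_self_inner hP2 hPs _).symm
  have hq2 : ‖(EuclideanSpace.single j (1:ℝ) : EuclideanSpace ℝ (Fin m))
        - Matrix.toEuclideanLin (Q * Qᵀ) (EuclideanSpace.single j (1:ℝ))‖ ^ 2
      = 1 - lev Q j := by
    have h := proj_pyth hP2 hPs (EuclideanSpace.single j (1:ℝ))
    rw [he1] at h
    simp only [one_pow] at h
    rw [hlp]
    linarith
  have hl1 : lev Q j ≤ 1 := by
    have := sq_nonneg ‖(EuclideanSpace.single j (1:ℝ) : EuclideanSpace ℝ (Fin m))
        - Matrix.toEuclideanLin (Q * Qᵀ) (EuclideanSpace.single j (1:ℝ))‖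
    linarith [hq2]
  have hpn : ‖Matrix.toEuclideanLin (Q * Qᵀ) (EuclideanSpace.single j (1:ℝ))‖
      = Real.sqrt (lev Q j) := by
    rw [hlp, Real.sqrt_sq (norm_nonneg _)]
  have hqn : ‖(EuclideanSpace.single j (1:ℝ) : EuclideanSpace ℝ (Fin m))
        - Matrix.toEuclideanLin (Q * Qᵀ) (EuclideanSpace.single j (1:ℝ))‖
      = Real.sqrt (1 - lev Q j) := by
    rw [← Real.sqrt_sq (norm_nonneg ((EuclideanSpace.single j (1:ℝ) : EuclideanSpace ℝ (Fin m))
        - Matrix.toEuclideanLin (Q * Qᵀ) (EuclideanSpace.single j (1:ℝ)))), hq2]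
  rw [hpn, hqn] at key
  -- final arithmetic
  rw [div_le_iff₀ hl]
  have hs1 : Real.sqrt ((1 - lev Q j) / lev Q j)
      = Real.sqrt (1 - lev Q j) / Real.sqrt (lev Q j) :=
    Real.sqrt_div (by linarith) _
  have hslsq : Real.sqrt (lev Q j) * Real.sqrt (lev Q j) = lev Q j :=
    Real.mul_self_sqrt hl.le
  have hsl0 : 0 < Real.sqrt (lev Q j) := Real.sqrt_pos.mpr hl
  have hls : lev Q j / Real.sqrt (lev Q j) = Real.sqrt (lev Q j) := by
    rw [div_eq_iff hsl0.ne', hslsq]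
  have hexp : (2 * (Real.sqrt (1 - lev Q j) / Real.sqrt (lev Q j)) + t / lev Q j) * t * lev Q j
      = t ^ 2 + 2 * t * (Real.sqrt (lev Q j) * Real.sqrt (1 - lev Q j)) := by
    have hr : (2 * (Real.sqrt (1 - lev Q j) / Real.sqrt (lev Q j)) + t / lev Q j) * t * lev Q j
        = 2 * t * Real.sqrt (1 - lev Q j) * (lev Q j / Real.sqrt (lev Q j))
          + t ^ 2 * (lev Q j / lev Q j) := by ring
    rw [hr, div_self (ne_of_gt hl), hls]
    ring
  rw [hs1, hexp]
  exact key
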